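/- Suppose b₁...bₙ immediately follows a₁...aₙ in the full Gray code of words, and i < n is the unique index with bᵢ = aᵢ ± 1. Then either a_k = 1 for all k > i, or a_k = 2k−1 for all k > i. -/

import Mathlib

/-- The full Gray code of words: for `n = 0` the single empty word; words of
the length-`n` code at even (0-indexed, i.e. odd 1-indexed) positions are
extended by last letters `1, 2, …, 2(n+1)-1` in increasing order, those at odd
(0-indexed) positions by the same last letters in decreasing order. -/
def grayCode : ℕ → List (List ℕ)
  | 0 => [[]]
  | n+1 =>
      (((grayCode n).zipIdx.map Prod.swap).map (fun p =>
        if p.1 % 2 = 0 then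
          (List.range (2*n + 1)).map (fun j => p.2 ++ [j + 1])
        else
          ((List.range (2*n + 1)).map (fun j => p.2 ++ [j + 1])).reverse)).flatten

/-- The 1-indexed `i`-th letter of a word. -/
def wd (a : List ℕ) (i : ℕ) : ℕ := a.getD (i - 1) 0

/-- A word `a₁…aₙ` is arc-disconnected if there is a `k ≥ 2` with
`a_k = 2k-1` and `a_j ≥ 2k-1` for all `j > k`. -/
def ArcDiscL (a : List ℕ) : Prop :=
  ∃ k, 2 ≤ k ∧ k ≤ a.length ∧ wd a k = 2*k - 1 ∧
    ∀ j, k < j → j ≤ a.length → 2*k - 1 ≤ wd a j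

/- ### Auxiliary lemmas -/

lemma gray_flatten_getElem? {α : Type*} (c : ℕ) (hc : 0 < c) :
    ∀ (L : List (List α)), (∀ l ∈ L, l.length = c) →
      ∀ m, L.flatten[m]? = (L[m / c]?).bind (fun l => l[m % c]?) := by
  intro L
  induction L with
  | nil => intro _ m; simp
  | cons l L ih =>
    intro h m
    have hl : l.length = c := h l List.mem_cons_self
    rw [List.flatten_cons]
    by_cases hm : m < c
    · rw [List.getElem?_append, if_pos (by omega), Nat.div_eq_of_lt hm,
        Nat.mod_eq_of_lt hm]
      simp
    · obtain ⟨t, rfl⟩ : ∃ t, m = t + c := ⟨m - c, by omega⟩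
      rw [List.getElem?_append_right (by omega), hl, Nat.add_sub_cancel,
        ih (fun l' hl' => h l' (List.mem_cons_of_mem _ hl')) t,
        Nat.add_div_right _ hc, Nat.add_mod_right]
      simp

lemma gray_length : ∀ n, ∀ a ∈ grayCode n, a.length = n := by
  intro n
  induction n with
  | zero => intro a ha; simp [grayCode] at ha; simp [ha]
  | succ n ih =>
    intro a ha
    simp only [grayCode, List.mem_flatten, List.mem_map] at ha
    obtain ⟨l, ⟨p, hp, rfl⟩, hal⟩ := ha
    have hp2 : p.2 ∈ grayCode n := by
      obtain ⟨⟨x, k⟩, hk, rfl⟩ := hp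
      show x ∈ grayCode n
      rw [(List.mem_zipIdx' hk).2]
      exact List.getElem_mem _
    have hlen := ih p.2 hp2
    by_cases hq : p.1 % 2 = 0
    · rw [if_pos hq] at hal
      obtain ⟨j, _, rfl⟩ := List.mem_map.mp hal
      simp [hlen]
    · rw [if_neg hq, List.mem_reverse] at hal
      obtain ⟨j, _, rfl⟩ := List.mem_map.mp hal
      simp [hlen]

lemma wd_app_lt {k : ℕ} (w : List ℕ) (x : ℕ) (hk1 : 1 ≤ k) (hk : k ≤ w.length) :
    wd (w ++ [x]) k = wd w k := by
  unfold wd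
  rw [List.getD_append _ _ _ _ (by omega)]

lemma wd_app_eq (w : List ℕ) (x : ℕ) : wd (w ++ [x]) (w.length + 1) = x := by
  unfold wd
  rw [List.getD_append_right _ _ _ _ (by omega)]
  simp

lemma wd_app_gt {k : ℕ} (w : List ℕ) (x : ℕ) (hk : w.length + 1 < k) :
    wd (w ++ [x]) k = 0 := by
  unfold wd
  rw [List.getD_eq_default]
  simp; omega

/-- The key structural lemma, proved by induction on `n`: consecutive words in
the full Gray code differ at a unique position `i`, by `±1`, and the suffix of
the earlier word after position `i` consists entirely of maximal letters
(if its index is even) or entirely of `1`s (if its index is odd). -/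
lemma gray_key : ∀ n m (a b : List ℕ), (grayCode n)[m]? = some a →
    (grayCode n)[m+1]? = some b →
    ∃ i, 1 ≤ i ∧ i ≤ n ∧ (wd b i = wd a i + 1 ∨ wd a i = wd b i + 1) ∧
      (∀ j, 1 ≤ j → j ≠ i → wd b j = wd a j) ∧
      (m % 2 = 0 → ∀ k, i < k → k ≤ n → wd a k = 2*k - 1) ∧
      (m % 2 = 1 → ∀ k, i < k → k ≤ n → wd a k = 1) := by
  intro n
  induction n with
  | zero =>
    intro m a b ha hb
    exfalso
    rw [show grayCode 0 = [[]] from rfl, List.getElem?_cons_succ] at hb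
    simp at hb
  | succ n ih =>
    intro m a b ha hb
    have hc : 0 < 2*n+1 := by omega
    have hlenL : ∀ l ∈ (((grayCode n).zipIdx.map Prod.swap).map (fun p =>
        if p.1 % 2 = 0 then
          (List.range (2*n + 1)).map (fun j => p.2 ++ [j + 1])
        else
          ((List.range (2*n + 1)).map (fun j => p.2 ++ [j + 1])).reverse)),
        l.length = 2*n+1 := by
      intro l hl
      obtain ⟨p, _, rfl⟩ := List.mem_map.mp hl
      by_cases hq : p.1 % 2 = 0 <;> simp [hq]
    rw [show grayCode (n+1) = (((grayCode n).zipIdx.map Prod.swap).map (fun p =>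
        if p.1 % 2 = 0 then
          (List.range (2*n + 1)).map (fun j => p.2 ++ [j + 1])
        else
          ((List.range (2*n + 1)).map (fun j => p.2 ++ [j + 1])).reverse)).flatten
      from rfl, gray_flatten_getElem? _ hc _ hlenL] at ha hb
    set c := 2*n+1 with hcdef
    set q := m / c with hqdef
    set r := m % c with hrdef
    have hmqr : m = c * q + r := (Nat.div_add_mod m c).symm
    have hrc : r < c := Nat.mod_lt _ hc
    rw [List.getElem?_map, List.getElem?_map, List.getElem?_zipIdx] at ha hb
    obtain ⟨w, hw⟩ : ∃ w, (grayCode n)[q]? = some w := by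
      cases h : (grayCode n)[q]? with
      | none => rw [h] at ha; simp at ha
      | some w => exact ⟨w, rfl⟩
    rw [hw] at ha
    simp only [Option.map_some, Option.bind_some, Prod.swap_prod_mk, Nat.zero_add] at ha
    have hwlen : w.length = n := gray_length n w (List.mem_of_getElem? hw)
    by_cases hrlast : r + 1 < c
    · -- same block
      have h1 : (m+1) / c = q := by
        rw [show m+1 = c*q + (r+1) by omega, Nat.mul_add_div hc,
          Nat.div_eq_of_lt hrlast]
        omega
      have h2 : (m+1) % c = r + 1 := by
        rw [show m+1 = c*q + (r+1) by omega, Nat.mul_add_mod,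
          Nat.mod_eq_of_lt hrlast]
      rw [h1, h2, hw] at hb
      simp only [Option.map_some, Option.bind_some, Prod.swap_prod_mk, Nat.zero_add] at hb
      refine ⟨n+1, by omega, le_refl _, ?_, ?_, ?_, ?_⟩
      · -- hdiff
        by_cases hq : q % 2 = 0
        · rw [if_pos hq] at ha hb
          rw [List.getElem?_map, List.getElem?_range (by omega)] at ha
          rw [List.getElem?_map, List.getElem?_range (by omega)] at hb
          simp only [Option.map_some] at ha hb
          obtain rfl : a = w ++ [r+1] := by exact (Option.some.inj ha).symm
          obtain rfl : b = w ++ [r+2] := by exact (Option.some.inj hb).symm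
          left
          rw [show n+1 = w.length+1 by omega, wd_app_eq, wd_app_eq]
        · rw [if_neg hq] at ha hb
          rw [List.getElem?_reverse (by simp <;> omega)] at ha
          rw [List.getElem?_reverse (by simp <;> omega)] at hb
          simp only [List.length_map, List.length_range] at ha hb
          rw [List.getElem?_map, List.getElem?_range (by omega)] at ha
          rw [List.getElem?_map, List.getElem?_range (by omega)] at hb
          simp only [Option.map_some] at ha hb
          obtain rfl : a = w ++ [c - 1 - r + 1] := by exact (Option.some.inj ha).symm
          obtain rfl : b = w ++ [c - 1 - (r+1) + 1] := by exact (Option.some.inj hb).symm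
          right
          rw [show n+1 = w.length+1 by omega, wd_app_eq, wd_app_eq]
          omega
      · -- hagree
        have key : ∃ x y, a = w ++ [x] ∧ b = w ++ [y] := by
          by_cases hq : q % 2 = 0
          · rw [if_pos hq] at ha hb
            rw [List.getElem?_map, List.getElem?_range (by omega)] at ha
            rw [List.getElem?_map, List.getElem?_range (by omega)] at hb
            simp only [Option.map_some] at ha hb
            exact ⟨r+1, r+2, (Option.some.inj ha).symm, (Option.some.inj hb).symm⟩
          · rw [if_neg hq] at ha hb
            rw [List.getElem?_reverse (by simp <;> omega)] at ha
            rw [List.getElem?_reverse (by simp <;> omega)] at hb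
            simp only [List.length_map, List.length_range] at ha hb
            rw [List.getElem?_map, List.getElem?_range (by omega)] at ha
            rw [List.getElem?_map, List.getElem?_range (by omega)] at hb
            simp only [Option.map_some] at ha hb
            exact ⟨_, _, (Option.some.inj ha).symm, (Option.some.inj hb).symm⟩
        obtain ⟨x, y, rfl, rfl⟩ := key
        intro j hj1 hjne
        rcases lt_or_ge j (n+1) with hj | hj
        · rw [wd_app_lt _ _ hj1 (by omega), wd_app_lt _ _ hj1 (by omega)]
        · rw [wd_app_gt _ _ (by omega), wd_app_gt _ _ (by omega)]
      · intro _ k hk1 hk2; omega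
      · intro _ k hk1 hk2; omega
    · -- block boundary: r = c - 1
      have hr : r = c - 1 := by omega
      have h1 : (m+1) / c = q + 1 := by
        rw [show m+1 = c*(q+1) by rw [Nat.mul_succ]; omega, Nat.mul_div_cancel_left _ hc]
      have h2 : (m+1) % c = 0 := by
        rw [show m+1 = c*(q+1) by rw [Nat.mul_succ]; omega]
        exact Nat.mul_mod_right c (q+1)
      rw [h1, h2] at hb
      obtain ⟨w', hw'⟩ : ∃ w', (grayCode n)[q+1]? = some w' := by
        cases h : (grayCode n)[q+1]? with
        | none => rw [h] at hb; simp at hb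
        | some w' => exact ⟨w', rfl⟩
      rw [hw'] at hb
      simp only [Option.map_some, Option.bind_some, Prod.swap_prod_mk, Nat.zero_add] at hb
      have hw'len : w'.length = n := gray_length n w' (List.mem_of_getElem? hw')
      obtain ⟨i, hi1, hin, hdiff', hagree', hpar0, hpar1⟩ := ih q w w' hw hw'
      -- identify a and b
      obtain ⟨x, hax, hbx, hx0, hx1⟩ :
          ∃ x, a = w ++ [x] ∧ b = w' ++ [x] ∧ (q % 2 = 0 → x = c) ∧ (q % 2 = 1 → x = 1) := by
        by_cases hq : q % 2 = 0
        · rw [if_pos hq] at ha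
          have hq1 : ¬ ((q+1) % 2 = 0) := by omega
          rw [if_neg hq1] at hb
          rw [List.getElem?_map, List.getElem?_range (by omega)] at ha
          rw [List.getElem?_reverse (by simp <;> omega)] at hb
          simp only [List.length_map, List.length_range, Nat.sub_zero] at hb
          rw [List.getElem?_map, List.getElem?_range (by omega)] at hb
          simp only [Option.map_some] at ha hb
          rw [show r + 1 = c by omega] at ha
          rw [show c - 1 + 1 = c by omega] at hb
          exact ⟨c, (Option.some.inj ha).symm, (Option.some.inj hb).symm,
            fun _ => rfl, fun h => by omega⟩
        · rw [if_neg hq] at ha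
          have hq1 : (q+1) % 2 = 0 := by omega
          rw [if_pos hq1] at hb
          rw [List.getElem?_reverse (by simp <;> omega)] at ha
          simp only [List.length_map, List.length_range] at ha
          rw [List.getElem?_map, List.getElem?_range (by omega)] at ha
          rw [List.getElem?_map, List.getElem?_range (by omega)] at hb
          simp only [Option.map_some] at ha hb
          rw [show c - 1 - r + 1 = 1 by omega] at ha
          rw [show 0 + 1 = 1 by rfl] at hb
          exact ⟨1, (Option.some.inj ha).symm, (Option.some.inj hb).symm,
            fun h => by omega, fun _ => rfl⟩
      subst hax; subst hbx
      have hparm : m % 2 = q % 2 := by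
        have hcq : c * q % 2 = q % 2 := by
          rw [Nat.mul_mod]
          have : c % 2 = 1 := by omega
          rw [this, one_mul]
          omega
        rw [hmqr, Nat.add_mod, hcq]
        omega
      refine ⟨i, hi1, by omega, ?_, ?_, ?_, ?_⟩
      · -- hdiff
        rw [wd_app_lt _ _ hi1 (by omega), wd_app_lt _ _ hi1 (by omega)]
        exact hdiff'
      · -- hagree
        intro j hj1 hjne
        rcases lt_or_ge j (n+1) with hj | hj
        · rw [wd_app_lt _ _ hj1 (by omega), wd_app_lt _ _ hj1 (by omega)]
          exact hagree' j hj1 hjne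
        · rcases eq_or_lt_of_le hj with hj' | hj'
          · rw [show j = w.length + 1 by omega, wd_app_eq,
              show w.length + 1 = w'.length + 1 by omega, wd_app_eq]
          · rw [wd_app_gt _ _ (by omega), wd_app_gt _ _ (by omega)]
      · -- even case
        intro hm0 k hk1 hk2
        have hq0 : q % 2 = 0 := by omega
        have hxc : x = c := hx0 hq0
        rcases lt_or_ge k (n+1) with hk | hk
        · rw [wd_app_lt _ _ (by omega) (by omega)]
          exact hpar0 hq0 k hk1 (by omega)
        · rw [show k = w.length + 1 by omega, wd_app_eq]
          omega
      · -- odd case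
        intro hm1 k hk1 hk2
        have hq1 : q % 2 = 1 := by omega
        have hx1' : x = 1 := hx1 hq1
        rcases lt_or_ge k (n+1) with hk | hk
        · rw [wd_app_lt _ _ (by omega) (by omega)]
          exact hpar1 hq1 k hk1 (by omega)
        · rw [show k = w.length + 1 by omega, wd_app_eq]
          omega

/-- If `b` immediately follows `a` in the full Gray code and the
unique differing (1-indexed) position `i` satisfies `i < n`, then either
`a_k = 1` for all `k > i`, or `a_k = 2k-1` for all `k > i`. -/
theorem stmt_12 (n m : ℕ) (a b : List ℕ)
    (ha : (grayCode n)[m]? = some a) (hb : (grayCode n)[m+1]? = some b)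
    (i : ℕ) (hi1 : 1 ≤ i) (hi2 : i < n)
    (hdiff : wd b i = wd a i + 1 ∨ wd a i = wd b i + 1)
    (hagree : ∀ j, j ≠ i → wd b j = wd a j) :
    (∀ k, i < k → k ≤ n → wd a k = 1) ∨ (∀ k, i < k → k ≤ n → wd a k = 2*k - 1) := by
  obtain ⟨i₀, hi₀1, hi₀n, hd', hag', hp0, hp1⟩ := gray_key n m a b ha hb
  have hne : wd b i₀ ≠ wd a i₀ := by rcases hd' with h | h <;> omega
  have hii : i₀ = i := by
    by_contra hcon
    exact hne (hagree i₀ hcon)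
  subst hii
  rcases Nat.mod_two_eq_zero_or_one m with h | h
  · right; exact hp0 h
  · left; exact hp1 h
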